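/- Assume Hypothesis (HA), the cyclic family hypothesis, and the spectral decomposition hypothesis; define μ̃_i(A) := μ̃(A ∩ C_i) for i ∈ {0,…,k−1}, indices taken mod k. Then for every bounded measurable h : M → ℝ, all ℓ, s ∈ {0,…,k−1}, and every x ∈ C_s: λ^{-(nk+ℓ)} · P_g^{nk+ℓ} h(x) → g_s(x) · ∫_M h dμ̃_{s+ℓ (mod k)} as n → ∞. -/

import Mathlib

open MeasureTheory ProbabilityTheory Filter Topology

namespace QEM

noncomputable section

variable {M : Type*} [MetricSpace M] [CompactSpace M] [MeasurableSpace M] [BorelSpace M]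

/-- The weighted Koopman operator on real-valued functions:
`P f (x) = e^{φ(x)} ∫ f(y) κ(x,dy)`. -/
def PR (φ : M → ℝ) (κ : Kernel M M) (f : M → ℝ) : M → ℝ :=
  fun x => Real.exp (φ x) * ∫ y, f y ∂(κ x)

/-- The weighted Koopman operator on complex-valued functions
(`P f := P(Re f) + i P(Im f)`, equivalently with the complex Bochner integral). -/
def PC (φ : M → ℝ) (κ : Kernel M M) (f : M → ℂ) : M → ℂ :=
  fun x => (Real.exp (φ x) : ℂ) * ∫ y, f y ∂(κ x)

/-- Bounded measurable real-valued functions. -/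
def BddMeas (f : M → ℝ) : Prop := Measurable f ∧ ∃ C : ℝ, ∀ x, |f x| ≤ C

/-- Bounded measurable complex-valued functions. -/
def BddMeasC (f : M → ℂ) : Prop := Measurable f ∧ ∃ C : ℝ, ∀ x, ‖f x‖ ≤ C

/-- The operator `P_g f := P (1_{g>0} · f)`. -/
def Pg (φ : M → ℝ) (κ : Kernel M M) (g : M → ℝ) : (M → ℝ) → (M → ℝ) :=
  fun f => PR φ κ (Set.indicator {x | 0 < g x} f)

/-- Complex version of `P_g`. -/
def PgC (φ : M → ℝ) (κ : Kernel M M) (g : M → ℝ) : (M → ℂ) → (M → ℂ) :=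
  fun f => PC φ κ (Set.indicator {x | 0 < g x} f)

/-- The indicator function of `{g > 0}`. -/
def oneG (g : M → ℝ) : M → ℝ := Set.indicator {x | 0 < g x} (fun _ => (1 : ℝ))

/-- The normalized restriction `μ̃` of `μ` to `{g > 0}`, i.e.
`μ̃(A) = μ(A ∩ {g>0}) / μ({g>0})`. -/
def mtilde (μ : Measure M) (g : M → ℝ) : Measure M :=
  (μ {x | 0 < g x})⁻¹ • μ.restrict {x | 0 < g x}

/-- The root-of-unity phase `e^{2πi j/k}`. -/
def rootU (k j : ℕ) : ℂ := Complex.exp (2 * (Real.pi : ℂ) * Complex.I * (j : ℂ) / (k : ℂ))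

/-- Basic standing setup: `μ` is a fully supported Borel probability measure, `κ` a
sub-Markov kernel with `κ(x,·) ≪ μ` for all `x`, and `φ` a (bounded) continuous function. -/
structure Setup (μ : Measure M) (κ : Kernel M M) (φ : M → ℝ) : Prop where
  prob : IsProbabilityMeasure μ
  fullSupp : ∀ U : Set M, IsOpen U → U.Nonempty → 0 < μ U
  subMarkov : ∀ x, κ x Set.univ ≤ 1
  ac : ∀ x, κ x ≪ μ
  contφ : Continuous φ

/-- Hypothesis (HA): (i) `P` is strong Feller; (ii) `lam > 0` equals the spectral radius of the
induced operator `T` on `L^∞(M,μ;ℂ)` (where `T` agrees a.e. with the pointwise operator `P` on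
bounded measurable representatives); (iii) the eigenspace of `P` at `lam` in `L^∞(M,μ)` is
one-dimensional, spanned by a continuous nonnegative `g ≢ 0` with `P g = lam·g` and
`∫ g dμ = μ {g>0}`; (iv) `P^*μ = lam·μ`. -/
structure HypHA (μ : Measure M) (κ : Kernel M M) (φ : M → ℝ)
    (T : Lp ℂ ⊤ μ →L[ℂ] Lp ℂ ⊤ μ) (lam : ℝ) (g : M → ℝ) : Prop where
  setup : Setup μ κ φ
  strongFeller : ∀ f : M → ℝ, BddMeas f → Continuous (PR φ κ f)
  lam_pos : 0 < lam
  Tcompat : ∀ f : M → ℂ, BddMeasC f → ∀ F : Lp ℂ ⊤ μ, ⇑F =ᵐ[μ] f →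
      ⇑(T F) =ᵐ[μ] PC φ κ f
  specRad : spectralRadius ℂ T = ENNReal.ofReal lam
  g_cont : Continuous g
  g_nonneg : ∀ x, 0 ≤ g x
  g_ne : g ≠ 0
  g_eigen : PR φ κ g = fun x => lam * g x
  g_int : ∫ x, g x ∂μ = (μ {x | 0 < g x}).toReal
  eigen_dim : ∀ f : M → ℝ, BddMeas f → PR φ κ f =ᵐ[μ] (fun x => lam * f x) →
      ∃ c : ℝ, f =ᵐ[μ] fun x => c * g x
  Pstar : ∀ f : M → ℝ, BddMeas f → ∫ x, PR φ κ f x ∂μ = lam * ∫ x, f x ∂μ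

/-- Membership in the point peripheral spectrum `σ_per(P)`:
`|α| = lam` and `P f = α f` for some nonzero `f ∈ L^∞(M,μ;ℂ)`. -/
def PerSpec (μ : Measure M) (κ : Kernel M M) (φ : M → ℝ) (lam : ℝ) (α : ℂ) : Prop :=
  ‖α‖ = lam ∧ ∃ f : M → ℂ, BddMeasC f ∧ ¬ (f =ᵐ[μ] 0) ∧ PC φ κ f =ᵐ[μ] fun x => α * f x

/-- `σ_per(P) = {lam·e^{2πi j/k} : j = 0, …, k-1}`. -/
def PerSpecEq (μ : Measure M) (κ : Kernel M M) (φ : M → ℝ) (lam : ℝ) (k : ℕ) : Prop :=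
  ∀ α : ℂ, PerSpec μ κ φ lam α ↔ ∃ j : ℕ, j < k ∧ α = (lam : ℂ) * rootU k j

/-- A family of `k` linearly independent, nonnegative, continuous functions with pairwise
disjoint supports, spanning `ker(P^k - lam^k)` in `L^∞(M,μ;ℂ)`, each of integral `μ {g>0}`. -/
structure PreFamily (μ : Measure M) (κ : Kernel M M) (φ : M → ℝ) (lam : ℝ) (g : M → ℝ)
    (k : ℕ) (gi : Fin k → M → ℝ) : Prop where
  cont : ∀ i, Continuous (gi i)
  nonneg : ∀ i x, 0 ≤ gi i x
  indep : LinearIndependent ℝ gi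
  span_ker : ∀ f : M → ℂ, BddMeasC f →
      (((PC φ κ)^[k] f) =ᵐ[μ] fun x => (lam : ℂ) ^ k * f x) ↔
        ∃ c : Fin k → ℂ, f =ᵐ[μ] fun x => ∑ i, c i * (gi i x : ℂ)
  integral : ∀ i, ∫ x, gi i x ∂μ = (μ {x | 0 < g x}).toReal
  disj : ∀ i j, i ≠ j → ∀ x, ¬ (0 < gi i x ∧ 0 < gi j x)

/-- The cyclic family hypothesis: nonnegative continuous `g_0, …, g_{k-1}` supported in `{g>0}`
with pairwise disjoint supports, spanning `ker(P^k - lam^k)` in `L^∞(M,μ;ℂ)`, with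
`∫ g_i dμ = μ {g>0}`, `P g_i = lam·g_{i-1 (mod k)}` and `g = (1/k) ∑ g_i`. -/
structure CyclicFamily (μ : Measure M) (κ : Kernel M M) (φ : M → ℝ) (lam : ℝ) (g : M → ℝ)
    (k : ℕ) [NeZero k] (gi : Fin k → M → ℝ) : Prop where
  cont : ∀ i, Continuous (gi i)
  nonneg : ∀ i x, 0 ≤ gi i x
  supported : ∀ i x, 0 < gi i x → 0 < g x
  disj : ∀ i j, i ≠ j → ∀ x, ¬ (0 < gi i x ∧ 0 < gi j x)
  span_ker : ∀ f : M → ℂ, BddMeasC f →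
      (((PC φ κ)^[k] f) =ᵐ[μ] fun x => (lam : ℂ) ^ k * f x) ↔
        ∃ c : Fin k → ℂ, f =ᵐ[μ] fun x => ∑ i, c i * (gi i x : ℂ)
  integral : ∀ i, ∫ x, gi i x ∂μ = (μ {x | 0 < g x}).toReal
  cycle : ∀ i : Fin k, PR φ κ (gi i) = fun x => lam * gi (i - 1) x
  avg : g = fun x => (1 / (k : ℝ)) * ∑ i, gi i x

/-- The spectral decomposition hypothesis: a closed `P_g`-invariant subspace `V` of
`L^∞({g>0},μ;ℂ)` with `L^∞({g>0},μ;ℂ) = span{g_0,…,g_{k-1}} ⊕ V` and such that the spectral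
radius of `P_g` restricted to `V` is `< lam` (expressed through a geometric bound on the
iterates, via Gelfand's formula). -/
structure SpecDecomp (μ : Measure M) (κ : Kernel M M) (φ : M → ℝ) (lam : ℝ) (g : M → ℝ)
    (k : ℕ) (gi : Fin k → M → ℝ) (V : Submodule ℂ (M → ℂ)) : Prop where
  meas : ∀ v ∈ V, Measurable v
  bdd : ∀ v ∈ V, ∃ C : ℝ, ∀ x, ‖v x‖ ≤ C
  supp : ∀ v ∈ V, ∀ x, ¬ 0 < g x → v x = 0
  invariant : ∀ v ∈ V, PgC φ κ g v ∈ V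
  closed : ∀ (u : ℕ → M → ℂ) (f : M → ℂ), (∀ n, u n ∈ V) → Measurable f →
      (∃ C : ℝ, ∀ x, ‖f x‖ ≤ C) → (∀ x, ¬ 0 < g x → f x = 0) →
      Tendsto (fun n => eLpNorm (u n - f) ⊤ μ) atTop (nhds 0) → f ∈ V
  decomp : ∀ f : M → ℂ, BddMeasC f → (∀ x, ¬ 0 < g x → f x = 0) →
      ∃ c : Fin k → ℂ, ∃ v ∈ V, f = fun x => (∑ i, c i * (gi i x : ℂ)) + v x
  unique : ∀ c : Fin k → ℂ, (fun x => ∑ i, c i * (gi i x : ℂ)) ∈ V → c = 0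
  gap : ∃ r : ℝ, 0 ≤ r ∧ r < lam ∧ ∃ C : ℝ, ∀ n : ℕ, ∀ v ∈ V,
      eLpNorm ((PgC φ κ g)^[n] v) ⊤ μ ≤ ENNReal.ofReal (C * r ^ n) * eLpNorm v ⊤ μ

/-- The operator `P^{k+1} - lam^{k+1}` on complex-valued functions. -/
def Qop (φ : M → ℝ) (κ : Kernel M M) (lam : ℝ) (k : ℕ) : (M → ℂ) → (M → ℂ) :=
  fun h x => (PC φ κ)^[k + 1] h x - (lam : ℂ) ^ (k + 1) * h x

set_option linter.unusedSectionVars false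

open Fin.NatCast Fin.CommRing

section Aux

variable {M : Type*} [MetricSpace M] [CompactSpace M] [MeasurableSpace M] [BorelSpace M]
variable {μ : Measure M} {κ : Kernel M M} {φ : M → ℝ} {lam : ℝ} {g : M → ℝ}

/-- A continuous function on a compact space is bounded. -/
lemma cont_bdd {f : M → ℝ} (hf : Continuous f) : ∃ C : ℝ, ∀ x, |f x| ≤ C := by
  rcases isEmpty_or_nonempty M with hM | hM
  · exact ⟨0, fun x => (IsEmpty.false x).elim⟩
  · obtain ⟨x0, hx0⟩ := (continuous_abs.comp hf).exists_forall_ge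
      (by simp [Filter.cocompact_eq_bot])
    exact ⟨|f x0|, fun x => hx0 x⟩

lemma integrable_of_bdd {E : Type*} [NormedAddCommGroup E] {ν : Measure M} [IsFiniteMeasure ν]
    {f : M → E} (hm : AEStronglyMeasurable f ν) {C : ℝ} (hC : ∀ y, ‖f y‖ ≤ C) :
    Integrable f ν :=
  (integrable_const C).mono' hm (Filter.Eventually.of_forall hC)

lemma kappa_finite (hS : Setup μ κ φ) (x : M) : IsFiniteMeasure (κ x) :=
  ⟨lt_of_le_of_lt (hS.subMarkov x) ENNReal.one_lt_top⟩

lemma kappa_isFiniteKernel (hS : Setup μ κ φ) : IsFiniteKernel κ :=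
  ⟨⟨1, ENNReal.one_lt_top, fun x => hS.subMarkov x⟩⟩

/-- Norm bound on integrals against a sub-Markov kernel. -/
lemma norm_int_kernel_le (hS : Setup μ κ φ) (x : M) {f : M → ℂ} {C : ℝ} (hC0 : 0 ≤ C)
    (hC : ∀ᵐ y ∂(κ x), ‖f y‖ ≤ C) : ‖∫ y, f y ∂(κ x)‖ ≤ C := by
  haveI := kappa_finite hS x
  calc ‖∫ y, f y ∂(κ x)‖ ≤ C * ((κ x) Set.univ).toReal :=
        norm_integral_le_of_norm_le_const hC
    _ ≤ C * 1 := by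
        refine mul_le_mul_of_nonneg_left ?_ hC0
        exact ENNReal.toReal_le_of_le_ofReal one_pos.le (by simpa using hS.subMarkov x)
    _ = C := mul_one C


/-- Measurability of the kernel integral. -/
lemma meas_int_kernel (hS : Setup μ κ φ) {f : M → ℂ} (hf : Measurable f) :
    Measurable fun x => ∫ y, f y ∂(κ x) := by
  haveI := kappa_isFiniteKernel hS
  have : StronglyMeasurable fun x => ∫ y, f y ∂(κ x) :=
    MeasureTheory.StronglyMeasurable.integral_kernel_prod_right
      (f := fun _ y => f y) (hf.comp measurable_snd).stronglyMeasurable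
  exact this.measurable

lemma bddMeasC_pc (hS : Setup μ κ φ) {E : ℝ} (hE : ∀ x, Real.exp (φ x) ≤ E)
    {f : M → ℂ} (hf : BddMeasC f) : BddMeasC (PC φ κ f) := by
  obtain ⟨hm, C, hC⟩ := hf
  have hC0 : (0:ℝ) ≤ max C 0 := le_max_right _ _
  constructor
  · exact ((Complex.measurable_ofReal.comp (Real.measurable_exp.comp hS.contφ.measurable)).mul
      (meas_int_kernel hS hm))
  · refine ⟨E * max C 0, fun x => ?_⟩
    have h1 : ‖∫ y, f y ∂(κ x)‖ ≤ max C 0 :=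
      norm_int_kernel_le hS x hC0
        (Filter.Eventually.of_forall fun y => le_trans (hC y) (le_max_left _ _))
    calc ‖PC φ κ f x‖ = Real.exp (φ x) * ‖∫ y, f y ∂(κ x)‖ := by
          simp [PC, norm_mul, Complex.norm_real, Real.norm_eq_abs,
            abs_of_pos (Real.exp_pos (φ x))]
      _ ≤ E * max C 0 := by
          apply mul_le_mul (hE x) h1 (norm_nonneg _)
          exact le_trans (Real.exp_pos (φ x)).le (hE x)

lemma bddMeasC_indicator {s : Set M} (hs : MeasurableSet s) {f : M → ℂ} (hf : BddMeasC f) :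
    BddMeasC (Set.indicator s f) := by
  obtain ⟨hm, C, hC⟩ := hf
  refine ⟨hm.indicator hs, max C 0, fun x => ?_⟩
  by_cases hx : x ∈ s
  · rw [Set.indicator_of_mem hx]; exact le_trans (hC x) (le_max_left _ _)
  · rw [Set.indicator_of_notMem hx]; simp [le_max_right 0 0, le_max_right C 0]

lemma measurableSet_pos {f : M → ℝ} (hf : Continuous f) : MeasurableSet {x | 0 < f x} :=
  (isOpen_lt continuous_const hf).measurableSet

lemma bddMeasC_pgc (hS : Setup μ κ φ) (hg : Continuous g) {E : ℝ}
    (hE : ∀ x, Real.exp (φ x) ≤ E) {f : M → ℂ} (hf : BddMeasC f) : BddMeasC (PgC φ κ g f) :=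
  bddMeasC_pc hS hE (bddMeasC_indicator (measurableSet_pos hg) hf)

lemma bddMeasC_pgc_iter (hS : Setup μ κ φ) (hg : Continuous g) {E : ℝ}
    (hE : ∀ x, Real.exp (φ x) ≤ E) {f : M → ℂ} (hf : BddMeasC f) (n : ℕ) :
    BddMeasC ((PgC φ κ g)^[n] f) := by
  induction n with
  | zero => simpa using hf
  | succ n ih =>
      rw [Function.iterate_succ_apply']
      exact bddMeasC_pgc hS hg hE ih

/-- `PgC` of a coerced real function is the coercion of `Pg`. -/
lemma pgc_coe (u : M → ℝ) :
    PgC φ κ g (fun x => (u x : ℂ)) = fun x => ((Pg φ κ g u x : ℝ) : ℂ) := by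
  funext x
  have hind : Set.indicator {x | 0 < g x} (fun x => (u x : ℂ)) =
      fun y => ((Set.indicator {x | 0 < g x} u y : ℝ) : ℂ) := by
    funext y
    by_cases hy : y ∈ {x | 0 < g x} <;> simp [Set.indicator, hy]
  rw [PgC, PC, hind]
  rw [show (∫ y, (fun y => ((Set.indicator {x | 0 < g x} u y : ℝ) : ℂ)) y ∂(κ x))
      = ((∫ y, Set.indicator {x | 0 < g x} u y ∂(κ x) : ℝ) : ℂ) from integral_ofReal]
  simp [Pg, PR, Complex.ofReal_mul]

lemma pgc_iter_coe (u : M → ℝ) (n : ℕ) :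
    (PgC φ κ g)^[n] (fun x => (u x : ℂ)) = fun x => (((Pg φ κ g)^[n] u x : ℝ) : ℂ) := by
  induction n with
  | zero => simp
  | succ n ih =>
      rw [Function.iterate_succ_apply', Function.iterate_succ_apply', ih, pgc_coe]


variable {k : ℕ} [NeZero k] {gi : Fin k → M → ℝ}

lemma kernel_null_of_eigen (hS : Setup μ κ φ) (hlam : 0 < lam) {w w' : M → ℝ}
    (hw : Continuous w) (hwn : ∀ y, 0 ≤ w y)
    (heig : PR φ κ w = fun x => lam * w' x) (x : M) (hx : w' x = 0) :
    κ x {y | 0 < w y} = 0 := by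
  haveI := kappa_finite hS x
  have h0 : Real.exp (φ x) * ∫ y, w y ∂(κ x) = 0 := by
    have := congrFun heig x
    rw [PR] at this
    rw [this, hx, mul_zero]
  have hint : ∫ y, w y ∂(κ x) = 0 := by
    rcases mul_eq_zero.mp h0 with h | h
    · exact absurd h (Real.exp_pos (φ x)).ne'
    · exact h
  obtain ⟨C, hC⟩ := cont_bdd hw
  have hInt : Integrable w (κ x) :=
    integrable_of_bdd hw.measurable.aestronglyMeasurable
      (C := C) (fun y => by simpa [Real.norm_eq_abs] using hC y)
  have hz : w =ᵐ[κ x] 0 :=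
    (integral_eq_zero_iff_of_nonneg (fun y => hwn y) hInt).mp hint
  have h2 : ∀ᵐ y ∂(κ x), ¬ (0 < w y) := by
    filter_upwards [hz] with y hy
    simp [hy]
  have := (MeasureTheory.ae_iff).mp h2
  simpa [not_not] using this

lemma kernel_null_S (hS : Setup μ κ φ) (hlam : 0 < lam) (hg : Continuous g)
    (hgn : ∀ y, 0 ≤ g y) (heig : PR φ κ g = fun x => lam * g x) (x : M) (hx : ¬ 0 < g x) :
    κ x {y | 0 < g y} = 0 :=
  kernel_null_of_eigen hS hlam hg hgn heig x (le_antisymm (not_lt.mp hx) (hgn x))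

lemma kernel_null_Ci (hS : Setup μ κ φ) (hlam : 0 < lam)
    (hgi : CyclicFamily μ κ φ lam g k gi) (j : Fin k) (x : M) (hx : ¬ 0 < gi j x) :
    κ x {y | 0 < gi (j + 1) y} = 0 := by
  refine kernel_null_of_eigen hS hlam (hgi.cont (j+1)) (hgi.nonneg (j+1)) ?_ x
    (le_antisymm (not_lt.mp hx) (hgi.nonneg j x))
  have := hgi.cycle (j+1)
  simpa using this

lemma pc_zero_of_null {s : Set M} {f : M → ℂ} (hf : ∀ y, y ∉ s → f y = 0) {x : M}
    (hx : κ x s = 0) : PC φ κ f x = 0 := by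
  have hsub : {y | f y ≠ 0} ⊆ s := fun y hy => by
    by_contra hys; exact hy (hf y hys)
  have hnull : κ x {y | f y ≠ 0} = 0 := measure_mono_null hsub hx
  have hz : ∀ᵐ y ∂(κ x), f y = 0 := by
    rw [MeasureTheory.ae_iff]
    simpa using hnull
  rw [PC, integral_eq_zero_of_ae hz, mul_zero]

lemma pgc_supp (hS : Setup μ κ φ) (hlam : 0 < lam) (hg : Continuous g)
    (hgn : ∀ y, 0 ≤ g y) (heig : PR φ κ g = fun x => lam * g x) (f : M → ℂ) (x : M)
    (hx : ¬ 0 < g x) : PgC φ κ g f x = 0 :=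
  pc_zero_of_null (fun y hy => Set.indicator_of_notMem hy f)
    (kernel_null_S hS hlam hg hgn heig x hx)

lemma gpos_iff (hgi : CyclicFamily μ κ φ lam g k gi) (x : M) :
    0 < g x ↔ ∃ m, 0 < gi m x := by
  constructor
  · intro hgx
    by_contra hno
    push_neg at hno
    have hz : ∀ m, gi m x = 0 := fun m => le_antisymm (hno m) (hgi.nonneg m x)
    have : g x = 0 := by
      rw [hgi.avg]
      simp [hz]
    exact hgx.ne' this
  · rintro ⟨m, hm⟩
    exact hgi.supported m x hm

lemma gi_eq_zero_off (hgi : CyclicFamily μ κ φ lam g k gi) {x : M} (hx : ¬ 0 < g x)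
    (m : Fin k) : gi m x = 0 :=
  le_antisymm (not_lt.mp fun h => hx (hgi.supported m x h)) (hgi.nonneg m x)

lemma gi_disj_zero (hgi : CyclicFamily μ κ φ lam g k gi) {x : M} {i j : Fin k}
    (hij : i ≠ j) (hi : 0 < gi i x) : gi j x = 0 :=
  le_antisymm (not_lt.mp fun h => hgi.disj i j hij x ⟨hi, h⟩) (hgi.nonneg j x)


lemma rc_coe : (RCLike.ofReal : ℝ → ℂ) = Complex.ofReal := rfl

lemma bddMeas_re {u : M → ℂ} (hu : BddMeasC u) : BddMeas (fun x => (u x).re) := by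
  obtain ⟨hm, C, hC⟩ := hu
  exact ⟨Complex.measurable_re.comp hm, C,
    fun x => le_trans (Complex.abs_re_le_norm (u x)) (by
      exact hC x)⟩

lemma bddMeas_im {u : M → ℂ} (hu : BddMeasC u) : BddMeas (fun x => (u x).im) := by
  obtain ⟨hm, C, hC⟩ := hu
  exact ⟨Complex.measurable_im.comp hm, C,
    fun x => le_trans (Complex.abs_im_le_norm (u x)) (by
      exact hC x)⟩

lemma integrable_of_bddMeasC {ν : Measure M} [IsFiniteMeasure ν] {f : M → ℂ}
    (hf : BddMeasC f) : Integrable f ν := by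
  obtain ⟨hm, C, hC⟩ := hf
  exact integrable_of_bdd hm.aestronglyMeasurable hC

lemma integrable_of_bddMeas {ν : Measure M} [IsFiniteMeasure ν] {f : M → ℝ}
    (hf : BddMeas f) : Integrable f ν := by
  obtain ⟨hm, C, hC⟩ := hf
  exact integrable_of_bdd hm.aestronglyMeasurable (C := C)
    (fun y => by simpa [Real.norm_eq_abs] using hC y)

/-- Pointwise decomposition of `PC` into real and imaginary parts. -/
lemma pc_re_im (hS : Setup μ κ φ) {u : M → ℂ} (hu : BddMeasC u) :
    PC φ κ u = fun x => ((PR φ κ (fun y => (u y).re) x : ℝ) : ℂ)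
      + ((PR φ κ (fun y => (u y).im) x : ℝ) : ℂ) * Complex.I := by
  funext x
  haveI := kappa_finite hS x
  have hInt : Integrable u (κ x) := integrable_of_bddMeasC hu
  have key := integral_re_add_im (𝕜 := ℂ) hInt
  simp only [RCLike.re_to_complex, RCLike.im_to_complex, RCLike.I_to_complex, rc_coe] at key
  rw [PC, ← key, PR, PR]
  push_cast
  ring

lemma bddMeas_pr (hS : Setup μ κ φ) {E : ℝ} (hE : ∀ x, Real.exp (φ x) ≤ E)
    {f : M → ℝ} (hf : BddMeas f) : BddMeas (PR φ κ f) := by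
  have h1 : BddMeasC (fun x => (f x : ℂ)) := by
    obtain ⟨hm, C, hC⟩ := hf
    exact ⟨Complex.measurable_ofReal.comp hm, C, fun x => by
      simpa [Complex.norm_real, Real.norm_eq_abs] using hC x⟩
  have h2 := bddMeasC_pc hS hE h1
  have h3 : PC φ κ (fun x => (f x : ℂ)) = fun x => ((PR φ κ f x : ℝ) : ℂ) := by
    funext x
    rw [PC, show (∫ y, ((f y : ℝ) : ℂ) ∂(κ x)) = ((∫ y, f y ∂(κ x) : ℝ) : ℂ)
      from integral_ofReal]
    simp [PR, Complex.ofReal_mul]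
  rw [h3] at h2
  obtain ⟨hm, C, hC⟩ := h2
  refine ⟨?_, C, fun x => by simpa [Complex.norm_real, Real.norm_eq_abs] using hC x⟩
  have : Measurable fun x => ((PR φ κ f x : ℝ) : ℂ) := hm
  exact Complex.measurable_re.comp this

/-- Complex version of `P^*μ = λ·μ`. -/
lemma pstar_c (hS : Setup μ κ φ)
    (hPstar : ∀ f : M → ℝ, BddMeas f → ∫ x, PR φ κ f x ∂μ = lam * ∫ x, f x ∂μ)
    {E : ℝ} (hE : ∀ x, Real.exp (φ x) ≤ E) {u : M → ℂ} (hu : BddMeasC u) :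
    ∫ x, PC φ κ u x ∂μ = lam * ∫ x, u x ∂μ := by
  haveI : IsProbabilityMeasure μ := hS.prob
  have hur := bddMeas_re hu
  have hui := bddMeas_im hu
  have hPr := bddMeas_pr hS hE hur
  have hPi := bddMeas_pr hS hE hui
  have hIu : Integrable u μ := integrable_of_bddMeasC hu
  have keyu := integral_re_add_im (𝕜 := ℂ) hIu
  simp only [RCLike.re_to_complex, RCLike.im_to_complex, RCLike.I_to_complex, rc_coe] at keyu
  rw [pc_re_im hS hu]
  rw [integral_add (by
        exact (integrable_of_bddMeas (ν := μ) hPr).ofReal)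
      (by
        exact ((integrable_of_bddMeas (ν := μ) hPi).ofReal.mul_const Complex.I))]
  rw [show (∫ x, ((PR φ κ (fun y => (u y).re) x : ℝ) : ℂ) ∂μ)
      = ((∫ x, PR φ κ (fun y => (u y).re) x ∂μ : ℝ) : ℂ) from integral_ofReal]
  rw [integral_mul_const, show (∫ x, ((PR φ κ (fun y => (u y).im) x : ℝ) : ℂ) ∂μ)
      = ((∫ x, PR φ κ (fun y => (u y).im) x ∂μ : ℝ) : ℂ) from integral_ofReal]
  rw [hPstar _ hur, hPstar _ hui, ← keyu]
  push_cast
  ring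


lemma sum_indicator_eq (hgi : CyclicFamily μ κ φ lam g k gi) {w : M → ℂ}
    (hsupp : ∀ x, ¬ 0 < g x → w x = 0) :
    (fun x => ∑ m, Set.indicator {y | 0 < gi m y} w x) = w := by
  funext x
  by_cases hgx : 0 < g x
  · obtain ⟨m₀, hm₀⟩ := (gpos_iff hgi x).mp hgx
    refine (Finset.sum_eq_single_of_mem m₀ (Finset.mem_univ m₀) (fun m _ hm => ?_)).trans
      (Set.indicator_of_mem (show x ∈ {y | 0 < gi m₀ y} from hm₀) w)
    have hz : gi m x = 0 := gi_disj_zero hgi (Ne.symm hm) hm₀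
    exact Set.indicator_of_notMem (by simp [hz]) w
  · rw [hsupp x hgx]
    refine Finset.sum_eq_zero fun m _ => ?_
    have hz : gi m x = 0 := gi_eq_zero_off hgi hgx m
    exact Set.indicator_of_notMem (by simp [hz]) w

/-- The cyclic duality relation: `∫_{C_j} P w dμ = λ ∫_{C_{j+1}} w dμ`. -/
lemma dual_cycle (hS : Setup μ κ φ) (hlam : 0 < lam) (hgi : CyclicFamily μ κ φ lam g k gi)
    (hPstar : ∀ f : M → ℝ, BddMeas f → ∫ x, PR φ κ f x ∂μ = lam * ∫ x, f x ∂μ)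
    {E : ℝ} (hE : ∀ x, Real.exp (φ x) ≤ E) {w : M → ℂ} (hw : BddMeasC w)
    (hsupp : ∀ x, ¬ 0 < g x → w x = 0) (j : Fin k) :
    ∫ x in {y | 0 < gi j y}, PC φ κ w x ∂μ
      = (lam : ℂ) * ∫ x in {y | 0 < gi (j + 1) y}, w x ∂μ := by
  haveI : IsProbabilityMeasure μ := hS.prob
  have hCm : ∀ m : Fin k, MeasurableSet {y | 0 < gi m y} :=
    fun m => measurableSet_pos (hgi.cont m)
  have indm : ∀ m : Fin k, BddMeasC (Set.indicator {y | 0 < gi m y} w) :=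
    fun m => bddMeasC_indicator (hCm m) hw
  have hwsum := sum_indicator_eq hgi hsupp
  have hPCsum : ∀ x, PC φ κ w x = ∑ m, PC φ κ (Set.indicator {y | 0 < gi m y} w) x := by
    intro x
    haveI := kappa_finite hS x
    have h1 : ∫ y, w y ∂(κ x)
        = ∫ y, (∑ m, Set.indicator {y | 0 < gi m y} w y) ∂(κ x) :=
      integral_congr_ae (Filter.Eventually.of_forall fun y => (congrFun hwsum y).symm)
    have h2 : ∫ y, (∑ m, Set.indicator {y | 0 < gi m y} w y) ∂(κ x)
        = ∑ m, ∫ y, Set.indicator {y | 0 < gi m y} w y ∂(κ x) :=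
      integral_finset_sum _ (fun m _ => integrable_of_bddMeasC (indm m))
    show (Real.exp (φ x) : ℂ) * ∫ y, w y ∂(κ x) = _
    rw [h1, h2, Finset.mul_sum]
    rfl
  calc ∫ x in {y | 0 < gi j y}, PC φ κ w x ∂μ
      = ∑ m, ∫ x in {y | 0 < gi j y}, PC φ κ (Set.indicator {y | 0 < gi m y} w) x ∂μ := by
        rw [show (fun x => PC φ κ w x) = fun x =>
            ∑ m, PC φ κ (Set.indicator {y | 0 < gi m y} w) x from funext hPCsum]
        exact integral_finset_sum _ (fun m _ =>
          (integrable_of_bddMeasC (bddMeasC_pc hS hE (indm m))).restrict)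
    _ = ∫ x in {y | 0 < gi j y}, PC φ κ (Set.indicator {y | 0 < gi (j+1) y} w) x ∂μ := by
        refine Finset.sum_eq_single (j+1) (fun m _ hm => ?_) (fun hm => absurd (Finset.mem_univ _) hm)
        refine setIntegral_eq_zero_of_forall_eq_zero fun x hx => ?_
        refine pc_zero_of_null (fun y hy => Set.indicator_of_notMem hy w) ?_
        have hmj : m - 1 ≠ j := fun hc => hm (by rw [← hc]; ring)
        have hzero : gi (m-1) x = 0 := gi_disj_zero hgi (Ne.symm hmj) hx
        have := kernel_null_Ci hS hlam hgi (m-1) x (by simp [hzero])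
        simpa using this
    _ = ∫ x, PC φ κ (Set.indicator {y | 0 < gi (j+1) y} w) x ∂μ := by
        refine setIntegral_eq_integral_of_forall_compl_eq_zero fun x hx => ?_
        refine pc_zero_of_null (fun y hy => Set.indicator_of_notMem hy w) ?_
        exact kernel_null_Ci hS hlam hgi j x hx
    _ = (lam : ℂ) * ∫ x, Set.indicator {y | 0 < gi (j+1) y} w x ∂μ := by
        rw [pstar_c hS hPstar hE (indm (j+1))]
    _ = (lam : ℂ) * ∫ x in {y | 0 < gi (j + 1) y}, w x ∂μ := by
        rw [integral_indicator (hCm (j+1))]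

lemma indicator_S_eq {w : M → ℂ} (hsupp : ∀ x, ¬ 0 < g x → w x = 0) :
    Set.indicator {x | 0 < g x} w = w := by
  funext y
  by_cases hy : y ∈ {x | 0 < g x}
  · exact Set.indicator_of_mem hy w
  · rw [Set.indicator_of_notMem hy, hsupp y hy]

lemma iter_dual (hS : Setup μ κ φ) (hlam : 0 < lam) (hg : Continuous g)
    (hgn : ∀ y, 0 ≤ g y) (heig : PR φ κ g = fun x => lam * g x)
    (hgi : CyclicFamily μ κ φ lam g k gi)
    (hPstar : ∀ f : M → ℝ, BddMeas f → ∫ x, PR φ κ f x ∂μ = lam * ∫ x, f x ∂μ)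
    {E : ℝ} (hE : ∀ x, Real.exp (φ x) ≤ E) :
    ∀ (n : ℕ) (w : M → ℂ), BddMeasC w → (∀ x, ¬ 0 < g x → w x = 0) → ∀ j : Fin k,
      ∫ x in {y | 0 < gi j y}, (PgC φ κ g)^[n] w x ∂μ
        = (lam : ℂ) ^ n * ∫ x in {y | 0 < gi (j + (n : Fin k)) y}, w x ∂μ := by
  intro n
  induction n with
  | zero => intro w hw hsupp j; simp
  | succ n ih =>
      intro w hw hsupp j
      rw [Function.iterate_succ_apply]
      have hw' : BddMeasC (PgC φ κ g w) := bddMeasC_pgc hS hg hE hw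
      have hsupp' : ∀ x, ¬ 0 < g x → PgC φ κ g w x = 0 :=
        fun x hx => pgc_supp hS hlam hg hgn heig w x hx
      rw [ih (PgC φ κ g w) hw' hsupp' j]
      have hpgc : PgC φ κ g w = PC φ κ w := by
        rw [PgC, indicator_S_eq hsupp]
      rw [hpgc, dual_cycle hS hlam hgi hPstar hE hw hsupp (j + (n : Fin k))]
      rw [show j + ((n+1 : ℕ) : Fin k) = j + (n : Fin k) + 1 by push_cast; ring]
      ring

lemma ae_norm_le_of_eLpNorm {f : M → ℂ} {B : ℝ} (hB : 0 ≤ B)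
    (h : eLpNorm f ⊤ μ ≤ ENNReal.ofReal B) : ∀ᵐ y ∂μ, ‖f y‖ ≤ B := by
  have h2 := enorm_ae_le_eLpNormEssSup f μ
  rw [eLpNorm_exponent_top] at h
  filter_upwards [h2] with y hy
  have h3 : (‖f y‖₊ : ENNReal) ≤ ENNReal.ofReal B := le_trans hy h
  have h4 := ENNReal.toReal_mono ENNReal.ofReal_ne_top h3
  rw [ENNReal.toReal_ofReal hB] at h4
  simpa using h4

lemma eLpNorm_le_of_bdd {f : M → ℂ} {C : ℝ} (hC : ∀ y, ‖f y‖ ≤ C) :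
    eLpNorm f ⊤ μ ≤ ENNReal.ofReal C := by
  rw [eLpNorm_exponent_top]
  exact eLpNormEssSup_le_of_ae_bound (Filter.Eventually.of_forall hC)


variable {V : Submodule ℂ (M → ℂ)}

lemma nu_zero (hS : Setup μ κ φ) (hlam : 0 < lam) (hg : Continuous g)
    (hgn : ∀ y, 0 ≤ g y) (heig : PR φ κ g = fun x => lam * g x)
    (hgi : CyclicFamily μ κ φ lam g k gi)
    (hPstar : ∀ f : M → ℝ, BddMeas f → ∫ x, PR φ κ f x ∂μ = lam * ∫ x, f x ∂μ)
    {E : ℝ} (hE : ∀ x, Real.exp (φ x) ≤ E)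
    (hV : SpecDecomp μ κ φ lam g k gi V) {v : M → ℂ} (hv : v ∈ V) (j : Fin k) :
    ∫ x in {y | 0 < gi j y}, v x ∂μ = 0 := by
  haveI : IsProbabilityMeasure μ := hS.prob
  obtain ⟨r, hr0, hrlam, C, hgap⟩ := hV.gap
  obtain ⟨Cv, hCv⟩ := hV.bdd v hv
  set C' := max C 0 with hC'
  set Cv' := max Cv 0 with hCv'
  have hC'0 : (0:ℝ) ≤ C' := le_max_right _ _
  have hCv'0 : (0:ℝ) ≤ Cv' := le_max_right _ _
  have hvb : BddMeasC v := ⟨hV.meas v hv, Cv, hCv⟩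
  have hvsupp : ∀ x, ¬ 0 < g x → v x = 0 := hV.supp v hv
  -- the a.e. bound on iterates
  have hbound : ∀ n : ℕ, ∀ᵐ y ∂μ, ‖(PgC φ κ g)^[n] v y‖ ≤ C' * r ^ n * Cv' := by
    intro n
    have h1 := hgap n v hv
    have h2 : eLpNorm v ⊤ μ ≤ ENNReal.ofReal Cv' :=
      eLpNorm_le_of_bdd (fun y => le_trans (hCv y) (le_max_left _ _))
    have h3 : eLpNorm ((PgC φ κ g)^[n] v) ⊤ μ ≤ ENNReal.ofReal (C' * r ^ n * Cv') := by
      calc eLpNorm ((PgC φ κ g)^[n] v) ⊤ μ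
          ≤ ENNReal.ofReal (C * r ^ n) * eLpNorm v ⊤ μ := h1
        _ ≤ ENNReal.ofReal (C' * r ^ n) * ENNReal.ofReal Cv' := by
            refine mul_le_mul' (ENNReal.ofReal_le_ofReal ?_) h2
            exact mul_le_mul_of_nonneg_right (le_max_left _ _) (pow_nonneg hr0 n)
        _ = ENNReal.ofReal (C' * r ^ n * Cv') := by
            rw [← ENNReal.ofReal_mul (by positivity)]
    exact ae_norm_le_of_eLpNorm (by positivity) h3
  -- the key identity and bound
  have hkey : ∀ m : ℕ, (lam : ℂ) ^ (m * k) * ∫ x in {y | 0 < gi j y}, v x ∂μ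
      = ∫ x in {y | 0 < gi j y}, (PgC φ κ g)^[m * k] v x ∂μ := by
    intro m
    have := iter_dual hS hlam hg hgn heig hgi hPstar hE (m * k) v hvb hvsupp j
    have hcast : ((m * k : ℕ) : Fin k) = 0 := by
      rw [Nat.cast_mul, Fin.natCast_self, mul_zero]
    rw [hcast, add_zero] at this
    exact this.symm
  have hIbound : ∀ m : ℕ, ‖∫ x in {y | 0 < gi j y}, v x ∂μ‖
      ≤ (C' * Cv') * ((r / lam) ^ k) ^ m := by
    intro m
    have hnorm : ‖∫ x in {y | 0 < gi j y}, (PgC φ κ g)^[m * k] v x ∂μ‖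
        ≤ C' * r ^ (m * k) * Cv' := by
      have hres : ∀ᵐ y ∂(μ.restrict {y | 0 < gi j y}),
          ‖(PgC φ κ g)^[m * k] v y‖ ≤ C' * r ^ (m * k) * Cv' :=
        ae_restrict_of_ae (hbound (m * k))
      calc ‖∫ x in {y | 0 < gi j y}, (PgC φ κ g)^[m * k] v x ∂μ‖
          ≤ (C' * r ^ (m * k) * Cv') * ((μ.restrict {y | 0 < gi j y}) Set.univ).toReal :=
            norm_integral_le_of_norm_le_const hres
        _ ≤ (C' * r ^ (m * k) * Cv') * 1 := by
            refine mul_le_mul_of_nonneg_left ?_ (by positivity)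
            refine ENNReal.toReal_le_of_le_ofReal one_pos.le ?_
            simp only [Measure.restrict_apply_univ, ENNReal.ofReal_one]
            exact measure_mono (Set.subset_univ _) |>.trans (by simp [prob_le_one])
        _ = C' * r ^ (m * k) * Cv' := mul_one _
    have heq : lam ^ (m * k) * ‖∫ x in {y | 0 < gi j y}, v x ∂μ‖
        = ‖∫ x in {y | 0 < gi j y}, (PgC φ κ g)^[m * k] v x ∂μ‖ := by
      rw [← hkey m, norm_mul, norm_pow, Complex.norm_real, Real.norm_eq_abs,
        abs_of_pos hlam]
    have hlampow : (0:ℝ) < lam ^ (m * k) := pow_pos hlam _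
    rw [← heq] at hnorm
    have h4 : ‖∫ x in {y | 0 < gi j y}, v x ∂μ‖
        ≤ (C' * r ^ (m * k) * Cv') / lam ^ (m * k) := by
      rw [le_div_iff₀ hlampow, mul_comm]
      exact hnorm
    calc ‖∫ x in {y | 0 < gi j y}, v x ∂μ‖
        ≤ (C' * r ^ (m * k) * Cv') / lam ^ (m * k) := h4
      _ = (C' * Cv') * ((r / lam) ^ k) ^ m := by
          rw [← pow_mul, div_pow, mul_comm k m]
          field_simp
  -- conclude by letting m → ∞
  have hq0 : (0:ℝ) ≤ (r / lam) ^ k := pow_nonneg (div_nonneg hr0 hlam.le) k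
  have hq1 : (r / lam) ^ k < 1 :=
    pow_lt_one₀ (div_nonneg hr0 hlam.le) ((div_lt_one hlam).mpr hrlam) (NeZero.ne k)
  have htend : Tendsto (fun m : ℕ => (C' * Cv') * ((r / lam) ^ k) ^ m) atTop (nhds 0) := by
    simpa using (tendsto_pow_atTop_nhds_zero_of_lt_one hq0 hq1).const_mul (C' * Cv')
  have hle : ‖∫ x in {y | 0 < gi j y}, v x ∂μ‖ ≤ 0 :=
    ge_of_tendsto htend (Filter.Eventually.of_forall hIbound)
  simpa using le_antisymm hle (norm_nonneg _)


lemma bddMeasC_coe {u : M → ℝ} (hu : BddMeas u) : BddMeasC (fun x => (u x : ℂ)) := by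
  obtain ⟨hm, C, hC⟩ := hu
  exact ⟨Complex.measurable_ofReal.comp hm, C, fun x => by
    simpa [Complex.norm_real, Real.norm_eq_abs] using hC x⟩

lemma bddMeas_of_cont {u : M → ℝ} (hu : Continuous u) : BddMeas u := by
  obtain ⟨C, hC⟩ := cont_bdd hu
  exact ⟨hu.measurable, C, hC⟩

lemma bddMeasC_sum (hgi : CyclicFamily μ κ φ lam g k gi) (d : Fin k → ℂ) :
    BddMeasC (fun x => ∑ i, d i * (gi i x : ℂ)) := by
  have h : ∀ i : Fin k, ∃ Ci : ℝ, ∀ x, |gi i x| ≤ Ci := fun i => cont_bdd (hgi.cont i)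
  choose Cs hCs using h
  refine ⟨Finset.measurable_sum _ (fun i _ =>
    (measurable_const.mul (Complex.measurable_ofReal.comp (hgi.cont i).measurable))),
    ∑ i, ‖d i‖ * Cs i, fun x => ?_⟩
  calc ‖∑ i, d i * (gi i x : ℂ)‖ ≤ ∑ i, ‖d i * (gi i x : ℂ)‖ := norm_sum_le _ _
    _ ≤ ∑ i, ‖d i‖ * Cs i := by
        refine Finset.sum_le_sum fun i _ => ?_
        rw [norm_mul, Complex.norm_real, Real.norm_eq_abs]
        exact mul_le_mul_of_nonneg_left (hCs i x) (norm_nonneg _)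

lemma sum_supp (hgi : CyclicFamily μ κ φ lam g k gi) (d : Fin k → ℂ) (x : M)
    (hx : ¬ 0 < g x) : ∑ i, d i * (gi i x : ℂ) = 0 :=
  Finset.sum_eq_zero fun i _ => by rw [gi_eq_zero_off hgi hx i]; simp

/-- Identification of the decomposition coefficients. -/
lemma coef_formula (hS : Setup μ κ φ) (hlam : 0 < lam) (hg : Continuous g)
    (hgn : ∀ y, 0 ≤ g y) (heig : PR φ κ g = fun x => lam * g x)
    (hgi : CyclicFamily μ κ φ lam g k gi)
    (hPstar : ∀ f : M → ℝ, BddMeas f → ∫ x, PR φ κ f x ∂μ = lam * ∫ x, f x ∂μ)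
    {E : ℝ} (hE : ∀ x, Real.exp (φ x) ≤ E)
    (hV : SpecDecomp μ κ φ lam g k gi V) {f : M → ℂ} {c : Fin k → ℂ} {v : M → ℂ}
    (hvV : v ∈ V) (heqf : f = fun x => (∑ i, c i * (gi i x : ℂ)) + v x) (j : Fin k) :
    ∫ x in {y | 0 < gi j y}, f x ∂μ = c j * (((μ {x | 0 < g x}).toReal : ℝ) : ℂ) := by
  haveI : IsProbabilityMeasure μ := hS.prob
  obtain ⟨Cv, hCv⟩ := hV.bdd v hvV
  have hIsum : Integrable (fun x => ∑ i, c i * (gi i x : ℂ)) (μ.restrict {y | 0 < gi j y}) :=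
    (integrable_of_bddMeasC (bddMeasC_sum hgi c)).restrict
  have hIv : Integrable v (μ.restrict {y | 0 < gi j y}) :=
    (integrable_of_bddMeasC ⟨hV.meas v hvV, Cv, hCv⟩).restrict
  rw [heqf, integral_add hIsum hIv,
    nu_zero hS hlam hg hgn heig hgi hPstar hE hV hvV j, add_zero]
  rw [integral_finset_sum _ (fun i _ => ((integrable_of_bddMeasC
    (bddMeasC_coe (bddMeas_of_cont (hgi.cont i)))).restrict.const_mul (c i)))]
  have hterm : ∀ i : Fin k, ∫ x in {y | 0 < gi j y}, c i * (gi i x : ℂ) ∂μ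
      = c i * ∫ x in {y | 0 < gi j y}, (gi i x : ℂ) ∂μ := fun i => integral_const_mul _ _
  simp only [hterm]
  refine (Finset.sum_eq_single_of_mem j (Finset.mem_univ j) (fun i _ hij => ?_)).trans ?_
  · rw [setIntegral_eq_zero_of_forall_eq_zero fun x hx => ?_, mul_zero]
    rw [gi_disj_zero hgi (Ne.symm hij) hx]
    simp
  · congr 1
    rw [setIntegral_eq_integral_of_forall_compl_eq_zero fun x hx => ?_]
    · rw [show (∫ x, ((gi j x : ℝ) : ℂ) ∂μ) = ((∫ x, gi j x ∂μ : ℝ) : ℂ) from integral_ofReal,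
        hgi.integral j]
    · rw [le_antisymm (not_lt.mp hx) (hgi.nonneg j x)]
      simp

/-- `P_g` acting on linear combinations of the cyclic family. -/
lemma pgc_sum (hS : Setup μ κ φ) (hgi : CyclicFamily μ κ φ lam g k gi) (d : Fin k → ℂ) :
    PgC φ κ g (fun x => ∑ i, d i * (gi i x : ℂ))
      = fun x => (lam : ℂ) * ∑ i, d i * (gi (i - 1) x : ℂ) := by
  funext x
  haveI := kappa_finite hS x
  have hind : Set.indicator {x | 0 < g x} (fun x => ∑ i, d i * (gi i x : ℂ))
      = fun x => ∑ i, d i * (gi i x : ℂ) := indicator_S_eq (sum_supp hgi d)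
  rw [PgC, PC, hind]
  rw [integral_finset_sum _ (fun i _ => ((integrable_of_bddMeasC
    (bddMeasC_coe (bddMeas_of_cont (hgi.cont i)))).const_mul (d i)))]
  have hterm : ∀ i : Fin k, ∫ y, d i * (gi i y : ℂ) ∂(κ x)
      = d i * ((∫ y, gi i y ∂(κ x) : ℝ) : ℂ) := by
    intro i
    rw [integral_const_mul]
    congr 1
    exact integral_ofReal
  simp only [hterm]
  have hcyc : ∀ i : Fin k, Real.exp (φ x) * ∫ y, gi i y ∂(κ x) = lam * gi (i - 1) x :=
    fun i => congrFun (hgi.cycle i) x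
  rw [Finset.mul_sum, Finset.mul_sum]
  refine Finset.sum_congr rfl fun i _ => ?_
  calc (Real.exp (φ x) : ℂ) * (d i * ((∫ y, gi i y ∂(κ x) : ℝ) : ℂ))
      = d i * (((Real.exp (φ x) * ∫ y, gi i y ∂(κ x) : ℝ)) : ℂ) := by push_cast; ring
    _ = d i * ((lam * gi (i - 1) x : ℝ) : ℂ) := by rw [hcyc i]
    _ = (lam : ℂ) * (d i * ((gi (i - 1) x : ℝ) : ℂ)) := by push_cast; ring

lemma pgc_iter_sum (hS : Setup μ κ φ) (hgi : CyclicFamily μ κ φ lam g k gi) :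
    ∀ (n : ℕ) (d : Fin k → ℂ), (PgC φ κ g)^[n] (fun x => ∑ i, d i * (gi i x : ℂ))
      = fun x => (lam : ℂ) ^ n * ∑ i, d i * (gi (i - (n : Fin k)) x : ℂ) := by
  intro n
  induction n with
  | zero => intro d; simp
  | succ n ih =>
      intro d
      rw [Function.iterate_succ_apply, pgc_sum hS hgi d]
      have hre : (fun x => (lam : ℂ) * ∑ i, d i * (gi (i - 1) x : ℂ))
          = fun x => ∑ i, ((lam : ℂ) * d (i + 1)) * (gi i x : ℂ) := by
        funext x
        rw [Finset.mul_sum]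
        refine Fintype.sum_equiv (Equiv.subRight (1 : Fin k)) _ _ (fun i => ?_)
        simp only [Equiv.subRight_apply]
        rw [sub_add_cancel]
        ring
      rw [hre, ih (fun i => (lam : ℂ) * d (i + 1))]
      funext x
      rw [Finset.mul_sum, Finset.mul_sum]
      refine Fintype.sum_equiv (Equiv.addRight (1 : Fin k)) _ _ (fun i => ?_)
      simp only [Equiv.coe_addRight]
      have hidx : (i + 1) - ((n + 1 : ℕ) : Fin k) = i - (n : Fin k) := by
        push_cast
        ring
      rw [hidx]
      ring

lemma pgc_add (hS : Setup μ κ φ) (hg : Continuous g) {u w : M → ℂ}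
    (hu : BddMeasC u) (hw : BddMeasC w) :
    PgC φ κ g (fun x => u x + w x) = fun x => PgC φ κ g u x + PgC φ κ g w x := by
  funext x
  haveI := kappa_finite hS x
  have hind : Set.indicator {x | 0 < g x} (fun y => u y + w y)
      = fun y => Set.indicator {x | 0 < g x} u y + Set.indicator {x | 0 < g x} w y := by
    funext y
    by_cases hy : y ∈ {x | 0 < g x} <;> simp [Set.indicator, hy]
  rw [PgC, PC, hind, integral_add
    (integrable_of_bddMeasC (bddMeasC_indicator (measurableSet_pos hg) hu))
    (integrable_of_bddMeasC (bddMeasC_indicator (measurableSet_pos hg) hw))]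
  rw [mul_add]
  rfl

lemma pgc_iter_add (hS : Setup μ κ φ) (hg : Continuous g) {E : ℝ}
    (hE : ∀ x, Real.exp (φ x) ≤ E) {u w : M → ℂ} (hu : BddMeasC u) (hw : BddMeasC w) :
    ∀ n : ℕ, (PgC φ κ g)^[n] (fun x => u x + w x)
      = fun x => (PgC φ κ g)^[n] u x + (PgC φ κ g)^[n] w x := by
  intro n
  induction n with
  | zero => simp
  | succ n ih =>
      rw [Function.iterate_succ_apply', ih, Function.iterate_succ_apply',
        Function.iterate_succ_apply']
      exact pgc_add hS hg (bddMeasC_pgc_iter hS hg hE hu n) (bddMeasC_pgc_iter hS hg hE hw n)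


/-- The a.e. geometric bound on iterates of elements of `V`. -/
lemma gap_ae (hV : SpecDecomp μ κ φ lam g k gi V) {r C : ℝ} (hr0 : 0 ≤ r)
    (hgap : ∀ n : ℕ, ∀ v ∈ V, eLpNorm ((PgC φ κ g)^[n] v) ⊤ μ
      ≤ ENNReal.ofReal (C * r ^ n) * eLpNorm v ⊤ μ)
    {v : M → ℂ} (hv : v ∈ V) {Cv : ℝ} (hCv : ∀ y, ‖v y‖ ≤ Cv) (n : ℕ) :
    ∀ᵐ y ∂μ, ‖(PgC φ κ g)^[n] v y‖ ≤ (max C 0) * r ^ n * (max Cv 0) := by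
  have h2 : eLpNorm v ⊤ μ ≤ ENNReal.ofReal (max Cv 0) :=
    eLpNorm_le_of_bdd (fun y => le_trans (hCv y) (le_max_left _ _))
  have h3 : eLpNorm ((PgC φ κ g)^[n] v) ⊤ μ
      ≤ ENNReal.ofReal ((max C 0) * r ^ n * (max Cv 0)) := by
    calc eLpNorm ((PgC φ κ g)^[n] v) ⊤ μ
        ≤ ENNReal.ofReal (C * r ^ n) * eLpNorm v ⊤ μ := hgap n v hv
      _ ≤ ENNReal.ofReal ((max C 0) * r ^ n) * ENNReal.ofReal (max Cv 0) := by
          refine mul_le_mul' (ENNReal.ofReal_le_ofReal ?_) h2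
          exact mul_le_mul_of_nonneg_right (le_max_left _ _) (pow_nonneg hr0 n)
      _ = ENNReal.ofReal ((max C 0) * r ^ n * (max Cv 0)) := by
          rw [← ENNReal.ofReal_mul (by positivity)]
  exact ae_norm_le_of_eLpNorm (by positivity) h3

/-- Pointwise bound on `P_g w (x)` from an a.e.-`μ` bound on `w`. -/
lemma pgc_pointwise_bound (hS : Setup μ κ φ) {w : M → ℂ} {B : ℝ} (hB : 0 ≤ B)
    (hbound : ∀ᵐ y ∂μ, ‖w y‖ ≤ B) (x : M) :
    ‖PgC φ κ g w x‖ ≤ Real.exp (φ x) * B := by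
  haveI := kappa_finite hS x
  have h2 : ∀ᵐ y ∂(κ x), ‖w y‖ ≤ B := (hS.ac x).ae_le hbound
  have hae : ∀ᵐ y ∂(κ x), ‖Set.indicator {x | 0 < g x} w y‖ ≤ B := by
    filter_upwards [h2] with y hy
    by_cases hyS : y ∈ {x | 0 < g x}
    · rwa [Set.indicator_of_mem hyS]
    · rw [Set.indicator_of_notMem hyS]; simpa using hB
  have hint := norm_int_kernel_le hS x hB hae
  calc ‖PgC φ κ g w x‖
      = Real.exp (φ x) * ‖∫ y, Set.indicator {x | 0 < g x} w y ∂(κ x)‖ := by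
        rw [PgC, PC, norm_mul, Complex.norm_real, Real.norm_eq_abs,
          abs_of_pos (Real.exp_pos (φ x))]
    _ ≤ Real.exp (φ x) * B := mul_le_mul_of_nonneg_left hint (Real.exp_pos (φ x)).le

end Aux
/-- **Step 1 of Theorem A.8.** Under Hypothesis (HA), the cyclic family and
spectral decomposition hypotheses: for every bounded measurable `h`, all `ℓ, s ∈ {0,…,k-1}`
and every `x ∈ C_s`, `lam^{-(nk+ℓ)} P_g^{nk+ℓ} h(x) → g_s(x) ∫ h dμ̃_{s+ℓ (mod k)}`. -/
theorem statement18 (μ : Measure M) (κ : Kernel M M) (φ : M → ℝ)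
    (T : Lp ℂ ⊤ μ →L[ℂ] Lp ℂ ⊤ μ) (lam : ℝ) (g : M → ℝ)
    (hHA : HypHA μ κ φ T lam g)
    (k : ℕ) [NeZero k] (hk : PerSpecEq μ κ φ lam k)
    (gi : Fin k → M → ℝ) (hgi : CyclicFamily μ κ φ lam g k gi)
    (V : Submodule ℂ (M → ℂ)) (hV : SpecDecomp μ κ φ lam g k gi V) :
    ∀ h : M → ℝ, BddMeas h → ∀ (ℓ s : Fin k) (x : M), 0 < gi s x →
      Tendsto (fun n : ℕ =>
          (lam ^ (n * k + (ℓ : ℕ)))⁻¹ * (Pg φ κ g)^[n * k + (ℓ : ℕ)] h x) atTop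
        (nhds (gi s x * ∫ y, h y ∂((mtilde μ g).restrict {z | 0 < gi (s + ℓ) z}))) := by
  intro h hBdd ℓ s x hgsx
  have hS := hHA.setup
  haveI : IsProbabilityMeasure μ := hS.prob
  have hlam := hHA.lam_pos
  have hg := hHA.g_cont
  have hgn := hHA.g_nonneg
  have heig := hHA.g_eigen
  have hPstar := hHA.Pstar
  obtain ⟨E, hE0⟩ := cont_bdd (Real.continuous_exp.comp hS.contφ)
  have hE : ∀ y, Real.exp (φ y) ≤ E := fun y => le_of_abs_le (hE0 y)
  -- the positive-measure support set
  set S : Set M := {y | 0 < g y} with hSdef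
  have hSmeas : MeasurableSet S := measurableSet_pos hg
  have hSopen : IsOpen S := isOpen_lt continuous_const hg
  have hSne : S.Nonempty := by
    obtain ⟨x₀, hx₀⟩ := Function.ne_iff.mp hHA.g_ne
    exact ⟨x₀, lt_of_le_of_ne (hgn x₀) (Ne.symm (by simpa using hx₀))⟩
  have hμS : 0 < μ S := hS.fullSupp S hSopen hSne
  have hμSfin : μ S < ⊤ := lt_of_le_of_lt prob_le_one ENNReal.one_lt_top
  have htS : (0:ℝ) < (μ S).toReal := ENNReal.toReal_pos hμS.ne' hμSfin.ne
  -- the decomposition of (the complexification of) h restricted to S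
  set hC : M → ℂ := fun y => (h y : ℂ) with hhC
  have hCb : BddMeasC hC := bddMeasC_coe hBdd
  set f : M → ℂ := Set.indicator S hC with hfdef
  have hfB : BddMeasC f := bddMeasC_indicator hSmeas hCb
  have hfsupp : ∀ y, ¬ 0 < g y → f y = 0 := fun y hy =>
    Set.indicator_of_notMem (show y ∉ S from hy) hC
  obtain ⟨c, v, hvV, heqf⟩ := hV.decomp f hfB hfsupp
  obtain ⟨Cv, hCv⟩ := hV.bdd v hvV
  have hvB : BddMeasC v := ⟨hV.meas v hvV, Cv, hCv⟩
  obtain ⟨r, hr0, hrlam, C, hgap⟩ := hV.gap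
  -- coefficient identification
  have hcoef := coef_formula hS hlam hg hgn heig hgi hPstar hE hV hvV heqf (s + ℓ)
  have hfC : ∫ y in {z | 0 < gi (s + ℓ) z}, f y ∂μ
      = ((∫ y in {z | 0 < gi (s + ℓ) z}, h y ∂μ : ℝ) : ℂ) := by
    rw [show (∫ y in {z | 0 < gi (s + ℓ) z}, f y ∂μ)
        = ∫ y in {z | 0 < gi (s + ℓ) z}, hC y ∂μ from
      setIntegral_congr_fun (measurableSet_pos (hgi.cont (s + ℓ)))
        (fun y hy => Set.indicator_of_mem (show y ∈ S from hgi.supported (s + ℓ) y hy) hC)]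
    exact integral_ofReal
  -- value of the target integral
  have htarget : ∫ y, h y ∂((mtilde μ g).restrict {z | 0 < gi (s + ℓ) z})
      = ((μ S).toReal)⁻¹ * ∫ y in {z | 0 < gi (s + ℓ) z}, h y ∂μ := by
    rw [mtilde, Measure.restrict_smul, integral_smul_measure, ENNReal.toReal_inv]
    rw [Measure.restrict_restrict (measurableSet_pos (hgi.cont (s + ℓ)))]
    have hsub : {z | 0 < gi (s + ℓ) z} ∩ S = {z | 0 < gi (s + ℓ) z} :=
      Set.inter_eq_self_of_subset_left (fun z hz => hgi.supported (s + ℓ) z hz)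
    rw [hsub]
    simp [hSdef]
  have hcval : c (s + ℓ) * ((gi s x : ℝ) : ℂ)
      = ((gi s x * ∫ y, h y ∂((mtilde μ g).restrict {z | 0 < gi (s + ℓ) z}) : ℝ) : ℂ) := by
    rw [htarget]
    have : c (s + ℓ) = ((((μ S).toReal)⁻¹ * ∫ y in {z | 0 < gi (s + ℓ) z}, h y ∂μ : ℝ) : ℂ) := by
      have h1 : ((∫ y in {z | 0 < gi (s + ℓ) z}, h y ∂μ : ℝ) : ℂ)
          = c (s + ℓ) * (((μ S).toReal : ℝ) : ℂ) := by rw [← hfC, hcoef]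
      have h2 : (((μ S).toReal : ℝ) : ℂ) ≠ 0 := by
        simpa using htS.ne'
      have hcc : c (s + ℓ)
          = ((∫ y in {z | 0 < gi (s + ℓ) z}, h y ∂μ : ℝ) : ℂ) / (((μ S).toReal : ℝ) : ℂ) := by
        rw [h1]
        field_simp
      rw [hcc]
      push_cast
      field_simp
    rw [this]; push_cast; ring
  -- the exact formula for the iterates, n ≥ 1
  have hkeyn : ∀ n : ℕ, 1 ≤ n →
      ((lam ^ (n * k + (ℓ : ℕ)))⁻¹ * (Pg φ κ g)^[n * k + (ℓ : ℕ)] h x : ℂ)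
        = c (s + ℓ) * ((gi s x : ℝ) : ℂ)
          + ((lam : ℂ) ^ (n * k + (ℓ : ℕ)))⁻¹ * (PgC φ κ g)^[n * k + (ℓ : ℕ)] v x := by
    intro n hn
    set N := n * k + (ℓ : ℕ) with hNdef
    have hNpos : 0 < N := by
      have hk1 : 1 ≤ k := Nat.one_le_iff_ne_zero.mpr (NeZero.ne k)
      have : 1 ≤ n * k := Nat.one_le_iff_ne_zero.mpr (Nat.mul_ne_zero
        (Nat.one_le_iff_ne_zero.mp hn) (NeZero.ne k))
      omega
    -- step 1 : complexification
    have hcoe : (((Pg φ κ g)^[N] h x : ℝ) : ℂ) = (PgC φ κ g)^[N] hC x := by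
      rw [pgc_iter_coe]
    -- step 2 : replace hC by f
    have hstep2 : (PgC φ κ g)^[N] hC = (PgC φ κ g)^[N] f := by
      obtain ⟨N', hN'⟩ : ∃ N', N = N' + 1 := ⟨N - 1, (Nat.succ_pred_eq_of_pos hNpos).symm⟩
      rw [hN', Function.iterate_succ_apply, Function.iterate_succ_apply]
      congr 1
      rw [PgC, PgC, hfdef, Set.indicator_indicator, Set.inter_self]
    -- step 3 : split into eigen part and tail
    have hstep3 : (PgC φ κ g)^[N] f
        = fun y => (lam : ℂ) ^ N * ∑ i, c i * (gi (i - (N : Fin k)) y : ℂ)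
            + (PgC φ κ g)^[N] v y := by
      rw [show f = fun y => (∑ i, c i * (gi i y : ℂ)) + v y from heqf]
      rw [pgc_iter_add hS hg hE (bddMeasC_sum hgi c) hvB N]
      rw [pgc_iter_sum hS hgi N c]
    -- step 4 : the sum at x collapses
    have hNcast : ((N : ℕ) : Fin k) = ℓ := by
      rw [hNdef, Nat.cast_add, Nat.cast_mul, Fin.natCast_self, mul_zero, zero_add,
        Fin.cast_val_eq_self]
    have hsum : ∑ i, c i * (gi (i - (N : Fin k)) x : ℂ) = c (s + ℓ) * ((gi s x : ℝ) : ℂ) := by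
      rw [hNcast]
      refine Finset.sum_eq_single_of_mem (s + ℓ) (Finset.mem_univ _) (fun i _ hi => ?_)
        |>.trans (by rw [add_sub_cancel_right])
      have hne : s ≠ i - ℓ := fun hc => hi (by rw [hc]; ring)
      rw [gi_disj_zero hgi hne hgsx]
      simp
    have hlamN : ((lam : ℂ) ^ N) ≠ 0 := pow_ne_zero _ (by exact_mod_cast hlam.ne')
    rw [hcoe, hstep2, hstep3]
    simp only []
    rw [hsum]
    push_cast
    rw [mul_add, ← mul_assoc, inv_mul_cancel₀ hlamN, one_mul]
  -- the tail tends to zero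
  have htail : Tendsto (fun n : ℕ =>
      ((lam : ℂ) ^ (n * k + (ℓ : ℕ)))⁻¹ * (PgC φ κ g)^[n * k + (ℓ : ℕ)] v x) atTop (nhds 0) := by
    set C' := max C 0 with hC'
    set Cv' := max Cv 0 with hCv'
    set q : ℝ := r / lam with hq
    have hq0 : 0 ≤ q := div_nonneg hr0 hlam.le
    have hq1 : q < 1 := (div_lt_one hlam).mpr hrlam
    set K : ℝ := Real.exp (φ x) * (C' * Cv') / lam with hK
    have hK0 : 0 ≤ K := by positivity
    refine squeeze_zero_norm' (a := fun n : ℕ => K * q ^ (n * k + (ℓ : ℕ) - 1)) ?_ ?_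
    · filter_upwards [Filter.eventually_atTop.mpr ⟨1, fun n hn => hn⟩] with n hn
      set N := n * k + (ℓ : ℕ) with hNdef
      have hNpos : 0 < N := by
        have : 1 ≤ n * k := Nat.one_le_iff_ne_zero.mpr (Nat.mul_ne_zero
          (Nat.one_le_iff_ne_zero.mp hn) (NeZero.ne k))
        omega
      obtain ⟨N', hN'⟩ : ∃ N', N = N' + 1 := ⟨N - 1, (Nat.succ_pred_eq_of_pos hNpos).symm⟩
      have hbound := gap_ae hV hr0 hgap hvV hCv N'
      have hpt : ‖(PgC φ κ g)^[N] v x‖ ≤ Real.exp (φ x) * (C' * r ^ N' * Cv') := by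
        rw [hN', Function.iterate_succ_apply']
        exact pgc_pointwise_bound hS (by positivity) hbound x
      have hnorm : ‖((lam : ℂ) ^ N)⁻¹ * (PgC φ κ g)^[N] v x‖
          ≤ (lam ^ N)⁻¹ * (Real.exp (φ x) * (C' * r ^ N' * Cv')) := by
        rw [norm_mul, norm_inv, norm_pow, Complex.norm_real, Real.norm_eq_abs,
          abs_of_pos hlam]
        exact mul_le_mul_of_nonneg_left hpt (by positivity)
      refine hnorm.trans (le_of_eq ?_)
      show (lam ^ N)⁻¹ * (Real.exp (φ x) * (C' * r ^ N' * Cv')) = K * q ^ (N - 1)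
      have hNm1 : N - 1 = N' := by omega
      rw [hNm1, hK, hq, hN', div_pow, pow_succ]
      field_simp
    · have hexp : Tendsto (fun n : ℕ => n * k + (ℓ : ℕ) - 1) atTop atTop := by
        refine Filter.tendsto_atTop_atTop.mpr fun b => ⟨b + 1, fun n hn => ?_⟩
        have hk1 : 1 ≤ k := Nat.one_le_iff_ne_zero.mpr (NeZero.ne k)
        have : n ≤ n * k := Nat.le_mul_of_pos_right n (Nat.pos_of_ne_zero (NeZero.ne k))
        omega
      have := ((tendsto_pow_atTop_nhds_zero_of_lt_one hq0 hq1).comp hexp).const_mul K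
      simpa using this
  -- assemble
  have hlim : Tendsto (fun n : ℕ =>
      ((lam ^ (n * k + (ℓ : ℕ)))⁻¹ * (Pg φ κ g)^[n * k + (ℓ : ℕ)] h x : ℂ)) atTop
      (nhds (c (s + ℓ) * ((gi s x : ℝ) : ℂ))) := by
    have h1 : Tendsto (fun n : ℕ => c (s + ℓ) * ((gi s x : ℝ) : ℂ)
        + ((lam : ℂ) ^ (n * k + (ℓ : ℕ)))⁻¹ * (PgC φ κ g)^[n * k + (ℓ : ℕ)] v x) atTop
        (nhds (c (s + ℓ) * ((gi s x : ℝ) : ℂ))) := by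
      simpa using tendsto_const_nhds.add htail
    refine Tendsto.congr' ?_ h1
    filter_upwards [Filter.eventually_atTop.mpr ⟨1, fun n hn => hn⟩] with n hn
    exact (hkeyn n hn).symm
  rw [hcval] at hlim
  have := (Complex.continuous_re.tendsto _).comp hlim
  simpa [Function.comp_def, ← Complex.ofReal_pow, ← Complex.ofReal_inv, ← Complex.ofReal_mul]
    using this
end

end QEM
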